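/- Let 𝒦₀ be the complex inner-product space of finitely supported functions on ℤ × I_q × I_q, with orthonormal basis {f_{m,p,t} : m ∈ ℤ, p,t ∈ I_q} (with the convention f_{m,p,t} = 0 whenever p ∉ I_q or t ∉ I_q). Define linear operators on 𝒦₀ by K₀ f_{m,p,t} = q^{-m/2}·|p/t|^{1/2}·f_{m,p,t}; (q − q⁻¹)·E₀ f_{m,p,t} = sgn(t)·q^{-(m-1)/2}·|p/t|^{1/2}·√(1+κ(q⁻¹t))·f_{m-1,p,q⁻¹t} − sgn(p)·q^{(m-1)/2}·|t/p|^{1/2}·√(1+κ(p))·f_{m-1,qp,t}; and (q − q⁻¹)·E₀† f_{m,p,t} = sgn(t)·q^{-(m+1)/2}·|p/t|^{1/2}·√(1+κ(t))·f_{m+1,p,qt} − sgn(p)·q^{(m+1)/2}·|t/p|^{1/2}·√(1+κ(q⁻¹p))·f_{m+1,q⁻¹p,t}. Then: (a) K₀ is invertible on 𝒦₀ and K₀E₀ = q·E₀K₀; (b) E₀†E₀ − E₀E₀† = (K₀² − K₀⁻²)/(q − q⁻¹) as operators on 𝒦₀; (c) the operators K₀^m E₀^k (E₀†)^l, for m ∈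 ℤ and k,l ∈ ℕ₀, are linearly independent over ℂ. -/

import Mathlib

open scoped Classical

noncomputable section

/-- The set `I_q = -q^ℕ ∪ q^ℤ`. -/
def Iq (q : ℝ) : Set ℝ :=
  {x | (∃ k : ℕ, x = -q ^ (k + 1)) ∨ ∃ k : ℤ, x = q ^ k}

/-- `κ(x) = sgn(x)·x²`. -/
def kappa (x : ℝ) : ℝ := Real.sign x * x ^ 2

/-- The space `𝒦₀` of finitely supported functions on `ℤ × I_q × I_q`. -/
abbrev KSpace (q : ℝ) : Type := (ℤ × ↥(Iq q) × ↥(Iq q)) →₀ ℂ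

/-- The basis vector `f_{m,p,t}`, with the convention `f_{m,p,t} = 0` when
`p ∉ I_q` or `t ∉ I_q`. -/
def fvec (q : ℝ) (m : ℤ) (p t : ℝ) : KSpace q :=
  if hp : p ∈ Iq q then
    if ht : t ∈ Iq q then Finsupp.single (m, ⟨p, hp⟩, ⟨t, ht⟩) 1 else 0
  else 0

/-- Extend an assignment on basis vectors to a linear operator on `𝒦₀`. -/
def extendOp (q : ℝ) (g : ℤ × ↥(Iq q) × ↥(Iq q) → KSpace q) :
    Module.End ℂ (KSpace q) :=
  Finsupp.lsum ℂ fun idx => LinearMap.toSpanSingleton ℂ (KSpace q) (g idx)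

/-- `K₀ f_{m,p,t} = q^{-m/2}·|p/t|^{1/2}·f_{m,p,t}`. -/
def K0 (q : ℝ) : Module.End ℂ (KSpace q) :=
  extendOp q fun idx =>
    ((Real.sqrt q ^ (-idx.1) * Real.sqrt |(idx.2.1 : ℝ) / (idx.2.2 : ℝ)| : ℝ) : ℂ) •
      fvec q idx.1 (idx.2.1 : ℝ) (idx.2.2 : ℝ)

/-- The inverse of `K₀`: `f_{m,p,t} ↦ q^{m/2}·|t/p|^{1/2}·f_{m,p,t}`. -/
def K0inv (q : ℝ) : Module.End ℂ (KSpace q) :=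
  extendOp q fun idx =>
    ((Real.sqrt q ^ idx.1 * Real.sqrt |(idx.2.2 : ℝ) / (idx.2.1 : ℝ)| : ℝ) : ℂ) •
      fvec q idx.1 (idx.2.1 : ℝ) (idx.2.2 : ℝ)

/-- `(q - q⁻¹)·E₀ f_{m,p,t} = sgn(t)·q^{-(m-1)/2}·|p/t|^{1/2}·√(1+κ(q⁻¹t))·f_{m-1,p,q⁻¹t}
    − sgn(p)·q^{(m-1)/2}·|t/p|^{1/2}·√(1+κ(p))·f_{m-1,qp,t}`. -/
def E0 (q : ℝ) : Module.End ℂ (KSpace q) :=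
  extendOp q fun idx =>
    (((q - q⁻¹)⁻¹ : ℝ) : ℂ) •
      (((Real.sign (idx.2.2 : ℝ) * Real.sqrt q ^ (1 - idx.1) *
            Real.sqrt |(idx.2.1 : ℝ) / (idx.2.2 : ℝ)| *
            Real.sqrt (1 + kappa ((idx.2.2 : ℝ) / q)) : ℝ) : ℂ) •
          fvec q (idx.1 - 1) (idx.2.1 : ℝ) ((idx.2.2 : ℝ) / q) -
        ((Real.sign (idx.2.1 : ℝ) * Real.sqrt q ^ (idx.1 - 1) *
            Real.sqrt |(idx.2.2 : ℝ) / (idx.2.1 : ℝ)| *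
            Real.sqrt (1 + kappa (idx.2.1 : ℝ)) : ℝ) : ℂ) •
          fvec q (idx.1 - 1) (q * (idx.2.1 : ℝ)) (idx.2.2 : ℝ))

/-- `(q - q⁻¹)·E₀† f_{m,p,t} = sgn(t)·q^{-(m+1)/2}·|p/t|^{1/2}·√(1+κ(t))·f_{m+1,p,qt}
    − sgn(p)·q^{(m+1)/2}·|t/p|^{1/2}·√(1+κ(q⁻¹p))·f_{m+1,q⁻¹p,t}`. -/
def E0dag (q : ℝ) : Module.End ℂ (KSpace q) :=
  extendOp q fun idx =>
    (((q - q⁻¹)⁻¹ : ℝ) : ℂ) •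
      (((Real.sign (idx.2.2 : ℝ) * Real.sqrt q ^ (-(1 + idx.1)) *
            Real.sqrt |(idx.2.1 : ℝ) / (idx.2.2 : ℝ)| *
            Real.sqrt (1 + kappa (idx.2.2 : ℝ)) : ℝ) : ℂ) •
          fvec q (idx.1 + 1) (idx.2.1 : ℝ) (q * (idx.2.2 : ℝ)) -
        ((Real.sign (idx.2.1 : ℝ) * Real.sqrt q ^ (idx.1 + 1) *
            Real.sqrt |(idx.2.2 : ℝ) / (idx.2.1 : ℝ)| *
            Real.sqrt (1 + kappa ((idx.2.1 : ℝ) / q)) : ℝ) : ℂ) •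
          fvec q (idx.1 + 1) ((idx.2.1 : ℝ) / q) (idx.2.2 : ℝ))

/-- `K₀^m` for `m ∈ ℤ`, using the inverse `K₀⁻¹` for negative powers. -/
def K0zpow (q : ℝ) (m : ℤ) : Module.End ℂ (KSpace q) :=
  if 0 ≤ m then K0 q ^ m.toNat else K0inv q ^ (-m).toNat

end

section Infra

namespace QAux

open Real

variable {q : ℝ}

local notation "W" => Real.sqrt q

lemma qne (hq0 : 0 < q) : q ≠ 0 := ne_of_gt hq0

lemma qsub_ne (hq0 : 0 < q) (hq1 : q < 1) : q - q⁻¹ ≠ 0 := by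
  have h1 : 1 < q⁻¹ := (one_lt_inv₀ hq0).2 hq1
  nlinarith

lemma W_pos (hq0 : 0 < q) : 0 < W := Real.sqrt_pos.2 hq0
lemma W_ne (hq0 : 0 < q) : W ≠ 0 := ne_of_gt (W_pos hq0)
lemma W_mul_self (hq0 : 0 < q) : W * W = q := Real.mul_self_sqrt hq0.le
lemma W_lt_one (hq0 : 0 < q) (hq1 : q < 1) : W < 1 := by
  have := Real.sqrt_lt_sqrt hq0.le hq1
  rwa [Real.sqrt_one] at this
lemma W_ne_one (hq0 : 0 < q) (hq1 : q < 1) : W ≠ 1 := ne_of_lt (W_lt_one hq0 hq1)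

/-! ### Iq membership -/

lemma mem_Iq_pos (q : ℝ) (k : ℤ) : (q : ℝ) ^ k ∈ Iq q := Or.inr ⟨k, rfl⟩

lemma mem_Iq_neg (q : ℝ) (k : ℕ) : -(q : ℝ) ^ (k + 1) ∈ Iq q := Or.inl ⟨k, rfl⟩

lemma mem_Iq_neg' (hq0 : 0 < q) {J : ℕ} (hJ : 1 ≤ J) : -(q : ℝ) ^ J ∈ Iq q := by
  obtain ⟨k, rfl⟩ := Nat.exists_eq_add_of_le' hJ
  exact mem_Iq_neg q k

lemma Iq.ne_zero (hq0 : 0 < q) {x : ℝ} (hx : x ∈ Iq q) : x ≠ 0 := by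
  rcases hx with ⟨k, rfl⟩ | ⟨k, rfl⟩
  · exact neg_ne_zero.2 (ne_of_gt (pow_pos hq0 _))
  · exact ne_of_gt (zpow_pos hq0 _)

lemma Iq.mul_q (hq0 : 0 < q) {x : ℝ} (hx : x ∈ Iq q) : q * x ∈ Iq q := by
  rcases hx with ⟨k, rfl⟩ | ⟨k, rfl⟩
  · refine Or.inl ⟨k + 1, ?_⟩; ring
  · refine Or.inr ⟨k + 1, ?_⟩
    rw [zpow_add₀ (qne hq0), zpow_one, mul_comm]

lemma Iq.of_div_q (hq0 : 0 < q) {x : ℝ} (hx : x / q ∈ Iq q) : x ∈ Iq q := by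
  have := Iq.mul_q hq0 hx
  rwa [mul_div_cancel₀ x (qne hq0)] at this

lemma Iq.of_mul_q (hq0 : 0 < q) {x : ℝ} (h : q * x ∈ Iq q) (hx : x ∉ Iq q) : x = -1 := by
  have hq := qne hq0
  rcases h with ⟨k, hk⟩ | ⟨k, hk⟩
  · rcases k with _ | k
    · have : q * x = q * (-1) := by rw [hk]; ring
      exact mul_left_cancel₀ hq this
    · exfalso; apply hx
      refine Or.inl ⟨k, ?_⟩
      apply mul_left_cancel₀ hq
      rw [hk]; ring
  · exfalso; apply hx
    refine Or.inr ⟨k - 1, ?_⟩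
    apply mul_left_cancel₀ hq
    rw [hk, zpow_sub₀ hq, zpow_one]
    field_simp

/-! ### kappa and sign -/

lemma kappa_neg_one : kappa (-1) = -1 := by
  rw [kappa, Real.sign_of_neg (by norm_num)]; norm_num

lemma kappa_of_neg {x : ℝ} (hx : 0 < x) : kappa (-x) = -(x ^ 2) := by
  rw [kappa, Real.sign_of_neg (neg_neg_iff_pos.2 hx), neg_sq]; ring

lemma kappa_of_pos {x : ℝ} (hx : 0 < x) : kappa x = x ^ 2 := by
  rw [kappa, Real.sign_of_pos hx, one_mul]

lemma sign_mul_q (hq0 : 0 < q) (x : ℝ) : Real.sign (q * x) = Real.sign x := by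
  rcases lt_trichotomy x 0 with h | h | h
  · rw [Real.sign_of_neg h, Real.sign_of_neg (mul_neg_of_pos_of_neg hq0 h)]
  · subst h; rw [mul_zero]
  · rw [Real.sign_of_pos h, Real.sign_of_pos (mul_pos hq0 h)]

lemma sign_div_q (hq0 : 0 < q) (x : ℝ) : Real.sign (x / q) = Real.sign x := by
  rcases lt_trichotomy x 0 with h | h | h
  · rw [Real.sign_of_neg h, Real.sign_of_neg (div_neg_of_neg_of_pos h hq0)]
  · subst h; rw [zero_div]
  · rw [Real.sign_of_pos h, Real.sign_of_pos (div_pos h hq0)]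

lemma sign_mul_self {x : ℝ} (hx : x ≠ 0) : Real.sign x * Real.sign x = 1 := by
  rcases hx.lt_or_gt with h | h
  · rw [Real.sign_of_neg h]; norm_num
  · rw [Real.sign_of_pos h]; norm_num

lemma kappa_div_q (hq0 : 0 < q) (x : ℝ) : kappa (x / q) = kappa x / q ^ 2 := by
  rw [kappa, kappa, sign_div_q hq0, div_pow]; ring

lemma one_add_kappa_nonneg (hq0 : 0 < q) (hq1 : q < 1) {x : ℝ} (hx : x ∈ Iq q) :
    0 ≤ 1 + kappa x := by
  rcases hx with ⟨k, rfl⟩ | ⟨k, rfl⟩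
  · rw [kappa_of_neg (pow_pos hq0 _)]
    have h1 : q ^ (k + 1) ≤ 1 := pow_le_one₀ hq0.le hq1.le
    nlinarith [pow_pos hq0 (k+1)]
  · rw [kappa_of_pos (zpow_pos hq0 _)]
    positivity

lemma one_add_kappa_div_nonneg (hq0 : 0 < q) (hq1 : q < 1) {x : ℝ} (hx : x ∈ Iq q) :
    0 ≤ 1 + kappa (x / q) := by
  rcases hx with ⟨k, rfl⟩ | ⟨k, rfl⟩
  · have hx : -q ^ (k + 1) / q = -(q ^ k) := by
      rw [pow_succ]; field_simp
    rw [hx, kappa_of_neg (pow_pos hq0 _)]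
    have h1 : q ^ k ≤ 1 := pow_le_one₀ hq0.le hq1.le
    nlinarith [pow_pos hq0 k]
  · have hx : (q : ℝ) ^ k / q = q ^ (k - 1) := by
      rw [zpow_sub₀ (qne hq0), zpow_one]
    rw [hx, kappa_of_pos (zpow_pos hq0 _)]
    positivity

lemma one_add_kappa_negpow_pos (hq0 : 0 < q) (hq1 : q < 1) {J : ℕ} (hJ : 1 ≤ J) :
    0 < 1 + kappa (-(q ^ J)) := by
  rw [kappa_of_neg (pow_pos hq0 _)]
  have h1 : q ^ J < 1 := pow_lt_one₀ hq0.le hq1 (by omega)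
  nlinarith [pow_pos hq0 J]

/-! ### sqrt arithmetic -/

lemma sqrt_abs_div (x y : ℝ) : Real.sqrt |x / y| = Real.sqrt |x| / Real.sqrt |y| := by
  rw [abs_div, Real.sqrt_div (abs_nonneg x)]

lemma sqrt_abs_pos {x : ℝ} (hx : x ≠ 0) : 0 < Real.sqrt |x| :=
  Real.sqrt_pos.2 (abs_pos.2 hx)

lemma sqrt_abs_ne {x : ℝ} (hx : x ≠ 0) : Real.sqrt |x| ≠ 0 := ne_of_gt (sqrt_abs_pos hx)

lemma sqrt_zpow (hq0 : 0 < q) (j : ℤ) : Real.sqrt ((q : ℝ) ^ j) = W ^ j := by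
  rw [show (q : ℝ) ^ j = W ^ j * W ^ j by rw [← mul_zpow, W_mul_self hq0],
    Real.sqrt_mul_self (zpow_nonneg (Real.sqrt_nonneg q) j)]

end QAux
end Infra
section Ops
namespace QAux

variable {q : ℝ}

local notation "W" => Real.sqrt q

lemma fvec_of_mem (m : ℤ) {p t : ℝ} (hp : p ∈ Iq q) (ht : t ∈ Iq q) :
    fvec q m p t = Finsupp.single ((m, ⟨p, hp⟩, ⟨t, ht⟩) : ℤ × ↥(Iq q) × ↥(Iq q)) 1 := by
  rw [fvec, dif_pos hp, dif_pos ht]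

lemma fvec_zero_left (m : ℤ) {p : ℝ} (hp : p ∉ Iq q) (t : ℝ) : fvec q m p t = 0 := by
  rw [fvec, dif_neg hp]

lemma fvec_zero_right (m : ℤ) (p : ℝ) {t : ℝ} (ht : t ∉ Iq q) : fvec q m p t = 0 := by
  rw [fvec]; split_ifs with hp
  · rfl
  · rfl

lemma extendOp_single (g : ℤ × ↥(Iq q) × ↥(Iq q) → KSpace q)
    (idx : ℤ × ↥(Iq q) × ↥(Iq q)) (c : ℂ) :
    extendOp q g (Finsupp.single idx c) = c • g idx := by
  rw [extendOp, Finsupp.lsum_single, LinearMap.toSpanSingleton_apply]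

lemma K0_fvec (hq0 : 0 < q) (m : ℤ) (p t : ℝ) :
    K0 q (fvec q m p t) = ((W ^ (-m) * Real.sqrt |p / t| : ℝ) : ℂ) • fvec q m p t := by
  by_cases hp : p ∈ Iq q
  · by_cases ht : t ∈ Iq q
    · rw [fvec_of_mem m hp ht, K0, extendOp_single, one_smul]
      simp [fvec_of_mem m hp ht]
    · rw [fvec_zero_right m p ht, map_zero, smul_zero]
  · rw [fvec_zero_left m hp t, map_zero, smul_zero]

lemma K0inv_fvec (hq0 : 0 < q) (m : ℤ) (p t : ℝ) :
    K0inv q (fvec q m p t) = ((W ^ m * Real.sqrt |t / p| : ℝ) : ℂ) • fvec q m p t := by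
  by_cases hp : p ∈ Iq q
  · by_cases ht : t ∈ Iq q
    · rw [fvec_of_mem m hp ht, K0inv, extendOp_single, one_smul]
      simp [fvec_of_mem m hp ht]
    · rw [fvec_zero_right m p ht, map_zero, smul_zero]
  · rw [fvec_zero_left m hp t, map_zero, smul_zero]

lemma E0_fvec (hq0 : 0 < q) (m : ℤ) (p t : ℝ) :
    E0 q (fvec q m p t) =
      (((q - q⁻¹)⁻¹ : ℝ) : ℂ) •
        (((Real.sign t * W ^ (1 - m) * Real.sqrt |p / t| *
              Real.sqrt (1 + kappa (t / q)) : ℝ) : ℂ) • fvec q (m - 1) p (t / q) -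
          ((Real.sign p * W ^ (m - 1) * Real.sqrt |t / p| *
              Real.sqrt (1 + kappa p) : ℝ) : ℂ) • fvec q (m - 1) (q * p) t) := by
  by_cases hp : p ∈ Iq q
  · by_cases ht : t ∈ Iq q
    · rw [fvec_of_mem m hp ht, E0, extendOp_single, one_smul]
    · rw [fvec_zero_right m p ht, map_zero,
        fvec_zero_right (m-1) p (fun h => ht (Iq.of_div_q hq0 h)),
        fvec_zero_right (m-1) (q*p) ht, smul_zero, smul_zero, sub_zero, smul_zero]
  · rw [fvec_zero_left m hp t, map_zero, fvec_zero_left (m-1) hp (t/q)]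
    by_cases hqp : q * p ∈ Iq q
    · have hp1 : p = -1 := Iq.of_mul_q hq0 hqp hp
      have : Real.sqrt (1 + kappa p) = 0 := by
        rw [hp1, kappa_neg_one]; norm_num
      rw [this, mul_zero, smul_zero, Complex.ofReal_zero, zero_smul, sub_zero, smul_zero]
    · rw [fvec_zero_left (m-1) hqp t, smul_zero, smul_zero, sub_zero, smul_zero]

lemma E0dag_fvec (hq0 : 0 < q) (m : ℤ) (p t : ℝ) :
    E0dag q (fvec q m p t) =
      (((q - q⁻¹)⁻¹ : ℝ) : ℂ) •
        (((Real.sign t * W ^ (-(1 + m)) * Real.sqrt |p / t| *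
              Real.sqrt (1 + kappa t) : ℝ) : ℂ) • fvec q (m + 1) p (q * t) -
          ((Real.sign p * W ^ (m + 1) * Real.sqrt |t / p| *
              Real.sqrt (1 + kappa (p / q)) : ℝ) : ℂ) • fvec q (m + 1) (p / q) t) := by
  by_cases hp : p ∈ Iq q
  · by_cases ht : t ∈ Iq q
    · rw [fvec_of_mem m hp ht, E0dag, extendOp_single, one_smul]
    · rw [fvec_zero_right m p ht, map_zero, fvec_zero_right (m+1) (p/q) ht]
      by_cases hqt : q * t ∈ Iq q
      · have ht1 : t = -1 := Iq.of_mul_q hq0 hqt ht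
        have : Real.sqrt (1 + kappa t) = 0 := by
          rw [ht1, kappa_neg_one]; norm_num
        rw [this, mul_zero, smul_zero, Complex.ofReal_zero, zero_smul]
        simp
      · rw [fvec_zero_right (m+1) p hqt]
        simp
  · rw [fvec_zero_left m hp t, map_zero, fvec_zero_left (m+1) hp (q*t),
      fvec_zero_left (m+1) (fun h => hp (Iq.of_div_q hq0 h)) t,
      smul_zero, smul_zero, sub_zero, smul_zero]

lemma end_ext {A B : Module.End ℂ (KSpace q)}
    (h : ∀ (m : ℤ) (p t : ℝ) (hp : p ∈ Iq q) (ht : t ∈ Iq q),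
      A (fvec q m p t) = B (fvec q m p t)) : A = B := by
  apply Finsupp.lhom_ext
  rintro ⟨m, ⟨p, hp⟩, ⟨t, ht⟩⟩ b
  have h1 : (Finsupp.single ((m, ⟨p, hp⟩, ⟨t, ht⟩) : ℤ × ↥(Iq q) × ↥(Iq q)) b)
      = b • fvec q m p t := by
    rw [fvec_of_mem m hp ht, Finsupp.smul_single, smul_eq_mul, mul_one]
  rw [h1, map_smul, map_smul, h m p t hp ht]

end QAux
end Ops
section PartA
namespace QAux

variable {q : ℝ}

local notation "W" => Real.sqrt q

lemma partA1 (hq0 : 0 < q) : K0inv q * K0 q = 1 := by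
  apply end_ext
  intro m p t hp ht
  have hpne := Iq.ne_zero hq0 hp
  have htne := Iq.ne_zero hq0 ht
  rw [Module.End.mul_apply, K0_fvec hq0, map_smul, K0inv_fvec hq0, Module.End.one_apply,
    smul_smul, ← Complex.ofReal_mul]
  have : (W ^ (-m) * Real.sqrt |p / t|) * (W ^ m * Real.sqrt |t / p|) = 1 := by
    rw [sqrt_abs_div, sqrt_abs_div, zpow_neg]
    have h1 := sqrt_abs_ne hpne
    have h2 := sqrt_abs_ne htne
    have h3 : (W : ℝ) ^ m ≠ 0 := zpow_ne_zero m (W_ne hq0)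
    field_simp
  rw [this, Complex.ofReal_one, one_smul]

lemma partA1' (hq0 : 0 < q) : K0 q * K0inv q = 1 := by
  apply end_ext
  intro m p t hp ht
  have hpne := Iq.ne_zero hq0 hp
  have htne := Iq.ne_zero hq0 ht
  rw [Module.End.mul_apply, K0inv_fvec hq0, map_smul, K0_fvec hq0, Module.End.one_apply,
    smul_smul, ← Complex.ofReal_mul]
  have : (W ^ m * Real.sqrt |t / p|) * (W ^ (-m) * Real.sqrt |p / t|) = 1 := by
    rw [sqrt_abs_div, sqrt_abs_div, zpow_neg]
    have h1 := sqrt_abs_ne hpne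
    have h2 := sqrt_abs_ne htne
    have h3 : (W : ℝ) ^ m ≠ 0 := zpow_ne_zero m (W_ne hq0)
    field_simp
  rw [this, Complex.ofReal_one, one_smul]

lemma partA2 (hq0 : 0 < q) : K0 q * E0 q = (q : ℂ) • (E0 q * K0 q) := by
  apply end_ext
  intro m p t hp ht
  have hWne := W_ne hq0
  have hW := W_mul_self hq0
  rw [Module.End.mul_apply, LinearMap.smul_apply, Module.End.mul_apply,
    E0_fvec hq0, K0_fvec hq0, map_smul, map_sub, map_smul, map_smul,
    K0_fvec hq0 (m-1) p (t/q), K0_fvec hq0 (m-1) (q*p) t, map_smul, E0_fvec hq0]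
  have hd1 : (W ^ (-(m-1)) * Real.sqrt |p / (t/q)| : ℝ)
      = q * (W ^ (-m) * Real.sqrt |p / t|) := by
    simp only [sqrt_abs_div, abs_of_pos hq0]
    rw [show -(m-1) = -m + 1 by ring, zpow_add₀ hWne, zpow_one]
    have h2 : Real.sqrt |t| ≠ 0 := sqrt_abs_ne (Iq.ne_zero hq0 ht)
    field_simp
    linear_combination Real.sqrt |p| * hW
  have hd2 : (W ^ (-(m-1)) * Real.sqrt |(q*p) / t| : ℝ)
      = q * (W ^ (-m) * Real.sqrt |p / t|) := by
    simp only [sqrt_abs_div, abs_mul, abs_of_pos hq0, Real.sqrt_mul hq0.le]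
    rw [show -(m-1) = -m + 1 by ring, zpow_add₀ hWne, zpow_one]
    have h2 : Real.sqrt |t| ≠ 0 := sqrt_abs_ne (Iq.ne_zero hq0 ht)
    field_simp
    linear_combination Real.sqrt |p| * hW
  rw [hd1, hd2]
  push_cast
  module

end QAux
end PartA
section PartB
namespace QAux

variable {q : ℝ}

local notation "W" => Real.sqrt q

lemma keyG1 (q B M A u v x y z w st sp kt kp : ℝ)
    (hq : q ≠ 0) (hB : B * B = q) (hBne : B ≠ 0) (hM : M ≠ 0)
    (hA : A * (q - q⁻¹) = 1)
    (hst : st * st = 1) (hsp : sp * sp = 1)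
    (hx : x * x = 1 + kt / q ^ 2) (hy : y * y = 1 + kt)
    (hz : z * z = 1 + kp) (hw : w * w = 1 + kp / q ^ 2) :
    A * ((st * (B / M) * u * x) * (A * ((st * (1 / M)) * (B * u) * x)))
      + A * ((sp * (M / B) * v * z) * (A * ((sp * M) * (v / B) * z)))
      - (A * ((st * (1 / (B * M)) * u * y) * (A * ((st * (1 / M)) * (u / B) * y)))
        + A * ((sp * (M * B) * v * w) * (A * ((sp * M) * (B * v) * w))))
      = A * (((1 / M) * u) * ((1 / M) * u) - (M * v) * (M * v)) := by
  have hqs : q - q⁻¹ ≠ 0 := by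
    intro h; rw [h, mul_zero] at hA; exact zero_ne_one hA
  have hAeq : A = (q - q⁻¹)⁻¹ := eq_inv_of_mul_eq_one_left hA
  calc
    A * ((st * (B / M) * u * x) * (A * ((st * (1 / M)) * (B * u) * x)))
      + A * ((sp * (M / B) * v * z) * (A * ((sp * M) * (v / B) * z)))
      - (A * ((st * (1 / (B * M)) * u * y) * (A * ((st * (1 / M)) * (u / B) * y)))
        + A * ((sp * (M * B) * v * w) * (A * ((sp * M) * (B * v) * w))))
        = (st * st) * (x * x) * (A * A * (B * B) * (u * u) / (M * M))
          + (sp * sp) * (z * z) * (A * A * (M * M) * (v * v) / (B * B))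
          - (st * st) * (y * y) * (A * A * (u * u) / ((M * M) * (B * B)))
          - (sp * sp) * (w * w) * (A * A * (M * M) * (B * B) * (v * v)) := by
      ring
    _ = A * (((1 / M) * u) * ((1 / M) * u) - (M * v) * (M * v)) := by
      rw [hst, hsp, hx, hy, hz, hw, hB]
      have hiq : q * q⁻¹ = 1 := mul_inv_cancel₀ hq
      linear_combination (A * (((1 / M) * u) * ((1 / M) * u) - (M * v) * (M * v))) * hA
        + (kt * A ^ 2 * u ^ 2 * (1 / (M * M)) * q⁻¹ - kp * A ^ 2 * M ^ 2 * v ^ 2 * q⁻¹) * hiq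

lemma partB (hq0 : 0 < q) (hq1 : q < 1) :
    E0dag q * E0 q - E0 q * E0dag q
      = ((q : ℂ) - (q : ℂ)⁻¹)⁻¹ • (K0 q ^ 2 - K0inv q ^ 2) := by
  apply end_ext
  intro m p t hp ht
  have hq := qne hq0
  have hWne := W_ne hq0
  have hW := W_mul_self hq0
  have hpne := Iq.ne_zero hq0 hp
  have htne := Iq.ne_zero hq0 ht
  have hA : q * (t / q) = t := by rw [mul_comm]; exact div_mul_cancel₀ t hq
  have hB : (q * p) / q = p := mul_div_cancel_left₀ p hq
  have hC : (q * t) / q = t := mul_div_cancel_left₀ t hq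
  have hD : q * (p / q) = p := by rw [mul_comm]; exact div_mul_cancel₀ p hq
  have r1 : Real.sqrt |p / (t / q)| = W * Real.sqrt |p / t| := by
    rw [show p / (t / q) = q * (p / t) by rw [div_div_eq_mul_div]; ring, abs_mul, abs_of_pos hq0,
      Real.sqrt_mul hq0.le]
  have r2 : Real.sqrt |(t / q) / p| = Real.sqrt |t / p| / W := by
    rw [show (t / q) / p = (t / p) / q by ring, abs_div, abs_of_pos hq0,
      Real.sqrt_div (abs_nonneg _)]
  have r3 : Real.sqrt |(q * p) / t| = W * Real.sqrt |p / t| := by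
    rw [show (q * p) / t = q * (p / t) by ring, abs_mul, abs_of_pos hq0,
      Real.sqrt_mul hq0.le]
  have r4 : Real.sqrt |t / (q * p)| = Real.sqrt |t / p| / W := by
    rw [show t / (q * p) = (t / p) / q by ring, abs_div, abs_of_pos hq0,
      Real.sqrt_div (abs_nonneg _)]
  have r5 : Real.sqrt |p / (q * t)| = Real.sqrt |p / t| / W := by
    rw [show p / (q * t) = (p / t) / q by ring, abs_div, abs_of_pos hq0,
      Real.sqrt_div (abs_nonneg _)]
  have r6 : Real.sqrt |(q * t) / p| = W * Real.sqrt |t / p| := by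
    rw [show (q * t) / p = q * (t / p) by ring, abs_mul, abs_of_pos hq0,
      Real.sqrt_mul hq0.le]
  have r7 : Real.sqrt |(p / q) / t| = Real.sqrt |p / t| / W := by
    rw [show (p / q) / t = (p / t) / q by ring, abs_div, abs_of_pos hq0,
      Real.sqrt_div (abs_nonneg _)]
  have r8 : Real.sqrt |t / (p / q)| = W * Real.sqrt |t / p| := by
    rw [show t / (p / q) = q * (t / p) by rw [div_div_eq_mul_div]; ring, abs_mul, abs_of_pos hq0,
      Real.sqrt_mul hq0.le]
  rw [LinearMap.sub_apply, Module.End.mul_apply, Module.End.mul_apply,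
    LinearMap.smul_apply, LinearMap.sub_apply,
    E0_fvec hq0 m p t, map_smul, map_sub, map_smul, map_smul,
    E0dag_fvec hq0 (m - 1) p (t / q), E0dag_fvec hq0 (m - 1) (q * p) t,
    E0dag_fvec hq0 m p t, map_smul, map_sub, map_smul, map_smul,
    E0_fvec hq0 (m + 1) p (q * t), E0_fvec hq0 (m + 1) (p / q) t,
    pow_two, pow_two, Module.End.mul_apply, Module.End.mul_apply,
    K0_fvec hq0 m p t, map_smul, K0inv_fvec hq0 m p t, map_smul,
    K0_fvec hq0 m p t, K0inv_fvec hq0 m p t,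
    hA, hB, hC, hD,
    sign_div_q hq0 t, sign_mul_q hq0 p, sign_mul_q hq0 t, sign_div_q hq0 p,
    r1, r2, r3, r4, r5, r6, r7, r8]
  have hx : Real.sqrt (1 + kappa (t / q)) * Real.sqrt (1 + kappa (t / q))
      = 1 + kappa t / q ^ 2 := by
    rw [Real.mul_self_sqrt (one_add_kappa_div_nonneg hq0 hq1 ht), kappa_div_q hq0]
  have hy : Real.sqrt (1 + kappa t) * Real.sqrt (1 + kappa t) = 1 + kappa t :=
    Real.mul_self_sqrt (one_add_kappa_nonneg hq0 hq1 ht)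
  have hz : Real.sqrt (1 + kappa p) * Real.sqrt (1 + kappa p) = 1 + kappa p :=
    Real.mul_self_sqrt (one_add_kappa_nonneg hq0 hq1 hp)
  have hw : Real.sqrt (1 + kappa (p / q)) * Real.sqrt (1 + kappa (p / q))
      = 1 + kappa p / q ^ 2 := by
    rw [Real.mul_self_sqrt (one_add_kappa_div_nonneg hq0 hq1 hp), kappa_div_q hq0]
  have hst := sign_mul_self htne
  have hsp := sign_mul_self hpne
  have hAm : (q - q⁻¹)⁻¹ * (q - q⁻¹) = 1 := inv_mul_cancel₀ (qsub_ne hq0 hq1)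
  have hMne : (W : ℝ) ^ m ≠ 0 := zpow_ne_zero m hWne
  have z1 : (W : ℝ) ^ (1 - m) = W / W ^ m := by rw [zpow_sub₀ hWne, zpow_one]
  have z2 : (W : ℝ) ^ (m - 1) = W ^ m / W := by rw [zpow_sub₀ hWne, zpow_one]
  have z3 : (W : ℝ) ^ (-(1 + (m - 1))) = (W ^ m)⁻¹ := by
    rw [show -(1 + (m - 1)) = -m by ring, zpow_neg]
  have z4 : (W : ℝ) ^ ((m - 1) + 1) = W ^ m := by rw [show m - 1 + 1 = m by ring]
  have z5 : (W : ℝ) ^ (-(1 + m)) = (W ^ m)⁻¹ * W⁻¹ := by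
    rw [show -(1 + m) = -m + (-1) by ring, zpow_add₀ hWne, zpow_neg, zpow_neg, zpow_one]
  have z6 : (W : ℝ) ^ (m + 1) = W ^ m * W := by rw [zpow_add₀ hWne, zpow_one]
  have z7 : (W : ℝ) ^ (1 - (m + 1)) = (W ^ m)⁻¹ := by
    rw [show 1 - (m + 1) = -m by ring, zpow_neg]
  have z8 : (W : ℝ) ^ ((m + 1) - 1) = W ^ m := by rw [show m + 1 - 1 = m by ring]
  have z9 : (W : ℝ) ^ (-m) = (W ^ m)⁻¹ := by rw [zpow_neg]
  rw [z3, z4, z5, z6, z7, z8, z1, z2, z9,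
    show m - 1 + 1 = m by ring, show m + 1 - 1 = m by ring]
  match_scalars
  · norm_cast
    linear_combination keyG1 q W (W ^ m) ((q - q⁻¹)⁻¹) (Real.sqrt |p / t|)
      (Real.sqrt |t / p|) (Real.sqrt (1 + kappa (t / q))) (Real.sqrt (1 + kappa t))
      (Real.sqrt (1 + kappa p)) (Real.sqrt (1 + kappa (p / q)))
      (Real.sign t) (Real.sign p) (kappa t) (kappa p)
      hq hW hWne hMne hAm hst hsp hx hy hz hw
  · norm_cast
    ring
  · norm_cast
    ring

end QAux
end PartB
section PartC1
namespace QAux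

variable {q : ℝ}

local notation "W" => Real.sqrt q

/-- Functions supported on indices whose `t`-coordinate has `|t| ≥ c`. -/
noncomputable def Msub (q : ℝ) (c : ℝ) : Submodule ℂ (KSpace q) where
  carrier := {x | ∀ i : ℤ × ↥(Iq q) × ↥(Iq q), x i ≠ 0 → c ≤ |(i.2.2 : ℝ)|}
  add_mem' := by
    intro x y hx hy i hi
    rw [Finsupp.add_apply] at hi
    by_cases h : x i = 0
    · exact hy i (by intro h'; rw [h, h', add_zero] at hi; exact hi rfl)
    · exact hx i h
  zero_mem' := by intro i hi; simp at hi
  smul_mem' := by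
    intro a x hx i hi
    rw [Finsupp.smul_apply] at hi
    exact hx i (by intro h; rw [h, smul_zero] at hi; exact hi rfl)

lemma mem_Msub {c : ℝ} {x : KSpace q} :
    x ∈ Msub q c ↔ ∀ i : ℤ × ↥(Iq q) × ↥(Iq q), x i ≠ 0 → c ≤ |(i.2.2 : ℝ)| :=
  Iff.rfl

lemma fvec_mem_Msub (m : ℤ) (p : ℝ) {t c : ℝ} (hc : c ≤ |t|) :
    fvec q m p t ∈ Msub q c := by
  intro i hi
  rw [fvec] at hi
  split_ifs at hi with hp ht
  · rw [Finsupp.single_apply] at hi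
    split_ifs at hi with h
    · rw [← h]; exact hc
    · exact absurd rfl hi
  · simp at hi
  · simp at hi

lemma fvec_mem_Msub' (m : ℤ) (p : ℝ) {t c : ℝ} (ht : t ∉ Iq q) :
    fvec q m p t ∈ Msub q c := by
  rw [fvec_zero_right m p ht]; exact Submodule.zero_mem _

lemma apply_mem_Msub {c : ℝ} {A : Module.End ℂ (KSpace q)}
    (hA : ∀ i : ℤ × ↥(Iq q) × ↥(Iq q), c ≤ |(i.2.2 : ℝ)| →
      A (Finsupp.single i 1) ∈ Msub q c)
    {x : KSpace q} (hx : x ∈ Msub q c) : A x ∈ Msub q c := by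
  classical
  have hx' : x = ∑ i ∈ x.support, Finsupp.single i (x i) := by
    conv_lhs => rw [← Finsupp.sum_single x]
    rfl
  rw [hx', map_sum]
  refine Submodule.sum_mem _ fun i hi => ?_
  have h1 : Finsupp.single i (x i) = (x i) • Finsupp.single i (1 : ℂ) := by
    rw [Finsupp.smul_single, smul_eq_mul, mul_one]
  rw [h1, map_smul]
  exact Submodule.smul_mem _ _ (hA i (hx i (Finsupp.mem_support_iff.1 hi)))

lemma single_eq_fvec (i : ℤ × ↥(Iq q) × ↥(Iq q)) :
    Finsupp.single i (1 : ℂ) = fvec q i.1 (i.2.1 : ℝ) (i.2.2 : ℝ) :=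
  (fvec_of_mem i.1 i.2.1.2 i.2.2.2).symm

lemma K0_mem_Msub (hq0 : 0 < q) {c : ℝ} {x : KSpace q} (hx : x ∈ Msub q c) :
    K0 q x ∈ Msub q c := by
  refine apply_mem_Msub (fun i hi => ?_) hx
  rw [single_eq_fvec, K0_fvec hq0]
  exact Submodule.smul_mem _ _ (fvec_mem_Msub _ _ hi)

lemma K0inv_mem_Msub (hq0 : 0 < q) {c : ℝ} {x : KSpace q} (hx : x ∈ Msub q c) :
    K0inv q x ∈ Msub q c := by
  refine apply_mem_Msub (fun i hi => ?_) hx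
  rw [single_eq_fvec, K0inv_fvec hq0]
  exact Submodule.smul_mem _ _ (fvec_mem_Msub _ _ hi)

lemma E0_mem_Msub (hq0 : 0 < q) (hq1 : q < 1) {c : ℝ} {x : KSpace q}
    (hx : x ∈ Msub q c) : E0 q x ∈ Msub q c := by
  refine apply_mem_Msub (fun i hi => ?_) hx
  rw [single_eq_fvec, E0_fvec hq0]
  have h1 : c ≤ |(i.2.2 : ℝ) / q| := by
    rw [abs_div, abs_of_pos hq0]
    calc c ≤ |(i.2.2 : ℝ)| := hi
    _ ≤ |(i.2.2 : ℝ)| / q := by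
        rw [le_div_iff₀ hq0]
        nlinarith [abs_nonneg (i.2.2 : ℝ)]
  exact Submodule.smul_mem _ _ (Submodule.sub_mem _
    (Submodule.smul_mem _ _ (fvec_mem_Msub _ _ h1))
    (Submodule.smul_mem _ _ (fvec_mem_Msub _ _ hi)))

lemma pow_mem_Msub {c : ℝ} {A : Module.End ℂ (KSpace q)}
    (hA : ∀ y : KSpace q, y ∈ Msub q c → A y ∈ Msub q c) (k : ℕ)
    {x : KSpace q} (hx : x ∈ Msub q c) : (A ^ k) x ∈ Msub q c := by
  induction k with
  | zero => simpa using hx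
  | succ n ih =>
      rw [pow_succ', Module.End.mul_apply]
      exact hA _ ih

lemma K0zpow_mem_Msub (hq0 : 0 < q) (m : ℤ) {c : ℝ} {x : KSpace q}
    (hx : x ∈ Msub q c) : K0zpow q m x ∈ Msub q c := by
  rw [K0zpow]
  split_ifs
  · exact pow_mem_Msub (fun y hy => K0_mem_Msub hq0 hy) _ hx
  · exact pow_mem_Msub (fun y hy => K0inv_mem_Msub hq0 hy) _ hx

lemma Msub_apply_eq_zero {c : ℝ} {x : KSpace q} (hx : x ∈ Msub q c)
    {i : ℤ × ↥(Iq q) × ↥(Iq q)} (hi : |(i.2.2 : ℝ)| < c) : x i = 0 := by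
  by_contra h
  exact absurd (hx i h) (not_le.2 hi)

end QAux
end PartC1
section PartC2
namespace QAux

variable {q : ℝ}

local notation "W" => Real.sqrt q

lemma dag_step (hq0 : 0 < q) (hq1 : q < 1) (a : ℤ) {J : ℕ} (hJ : 1 ≤ J) :
    ∃ c : ℝ, c ≠ 0 ∧ E0dag q (fvec q a (-(q ^ 1)) (-(q ^ J)))
      = ((c : ℝ) : ℂ) • fvec q (a + 1) (-(q ^ 1)) (-(q ^ (J + 1))) := by
  have h1 : (-(q ^ 1) : ℝ) / q = -1 := by
    rw [pow_one, neg_div, div_self (qne hq0)]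
  have h3 : q * -(q ^ J) = -(q ^ (J + 1)) := by rw [pow_succ]; ring
  refine ⟨(q - q⁻¹)⁻¹ * (Real.sign (-(q ^ J)) * W ^ (-(1 + a)) *
    Real.sqrt |(-(q ^ 1)) / (-(q ^ J))| * Real.sqrt (1 + kappa (-(q ^ J)))), ?_, ?_⟩
  · refine mul_ne_zero (inv_ne_zero (qsub_ne hq0 hq1)) ?_
    refine mul_ne_zero (mul_ne_zero (mul_ne_zero ?_ (zpow_ne_zero _ (W_ne hq0))) ?_) ?_
    · rw [Real.sign_of_neg (neg_neg_iff_pos.2 (pow_pos hq0 _))]; norm_num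
    · exact sqrt_abs_ne (div_ne_zero (neg_ne_zero.2 (ne_of_gt (pow_pos hq0 _)))
        (neg_ne_zero.2 (ne_of_gt (pow_pos hq0 _))))
    · exact ne_of_gt (Real.sqrt_pos.2 (one_add_kappa_negpow_pos hq0 hq1 hJ))
  · rw [E0dag_fvec hq0, h1, h3]
    have h2 : Real.sqrt (1 + kappa (-1)) = 0 := by rw [kappa_neg_one]; norm_num
    rw [h2, mul_zero, Complex.ofReal_zero, zero_smul, sub_zero, smul_smul,
      ← Complex.ofReal_mul]

lemma chain_dag (hq0 : 0 < q) (hq1 : q < 1) (n l : ℕ) :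
    ∃ c : ℝ, c ≠ 0 ∧ (E0dag q ^ l) (fvec q 0 (-(q ^ 1)) (-(q ^ (n + 1))))
      = ((c : ℝ) : ℂ) • fvec q l (-(q ^ 1)) (-(q ^ (n + 1 + l))) := by
  induction l with
  | zero => exact ⟨1, one_ne_zero, by simp⟩
  | succ l ih =>
      obtain ⟨c, hc, heq⟩ := ih
      obtain ⟨d, hd, hstep⟩ := dag_step hq0 hq1 l (J := n + 1 + l) (by omega)
      refine ⟨d * c, mul_ne_zero hd hc, ?_⟩
      rw [pow_succ', Module.End.mul_apply, heq, map_smul, hstep, smul_smul,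
        ← Complex.ofReal_mul, show n + 1 + (l + 1) = n + 1 + l + 1 by ring]
      push_cast
      module

lemma e0_step (hq0 : 0 < q) (hq1 : q < 1) (a : ℤ) (k : ℕ) {J : ℕ} (hJ : 1 ≤ J) :
    ∃ c : ℝ, c ≠ 0 ∧ ∃ r ∈ Msub q (q ^ (J - 1)),
      E0 q (fvec q a (-(q ^ (k + 1))) (-(q ^ J)))
        = ((c : ℝ) : ℂ) • fvec q (a - 1) (-(q ^ (k + 2))) (-(q ^ J)) + r := by
  have h3 : q * -(q ^ (k + 1)) = -(q ^ (k + 2)) := by rw [pow_succ]; ring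
  have h4 : (-(q ^ J) : ℝ) / q = -(q ^ (J - 1)) := by
    conv_lhs => rw [show J = (J - 1) + 1 from (Nat.succ_pred_eq_of_pos hJ).symm]
    rw [pow_succ, neg_div, mul_div_assoc, div_self (qne hq0), mul_one]
  refine ⟨-((q - q⁻¹)⁻¹ * (Real.sign (-(q ^ (k + 1))) * W ^ (a - 1) *
      Real.sqrt |(-(q ^ J)) / (-(q ^ (k + 1)))| * Real.sqrt (1 + kappa (-(q ^ (k + 1)))))),
    ?_, ?_⟩
  · refine neg_ne_zero.2 (mul_ne_zero (inv_ne_zero (qsub_ne hq0 hq1)) ?_)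
    refine mul_ne_zero (mul_ne_zero (mul_ne_zero ?_ (zpow_ne_zero _ (W_ne hq0))) ?_) ?_
    · rw [Real.sign_of_neg (neg_neg_iff_pos.2 (pow_pos hq0 _))]; norm_num
    · exact sqrt_abs_ne (div_ne_zero (neg_ne_zero.2 (ne_of_gt (pow_pos hq0 _)))
        (neg_ne_zero.2 (ne_of_gt (pow_pos hq0 _))))
    · exact ne_of_gt (Real.sqrt_pos.2 (one_add_kappa_negpow_pos hq0 hq1 (by omega)))
  refine ⟨(((q - q⁻¹)⁻¹ * (Real.sign (-(q ^ J)) * W ^ (1 - a) *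
      Real.sqrt |(-(q ^ (k + 1))) / (-(q ^ J))| * Real.sqrt (1 + kappa (-(q ^ (J - 1))))) : ℝ) : ℂ)
      • fvec q (a - 1) (-(q ^ (k + 1))) (-(q ^ (J - 1))), ?_, ?_⟩
  · refine Submodule.smul_mem _ _ (fvec_mem_Msub _ _ ?_)
    rw [abs_neg, abs_of_pos (pow_pos hq0 _)]
  · rw [E0_fvec hq0, h3, h4]
    push_cast
    module

lemma e0_pow (hq0 : 0 < q) (hq1 : q < 1) (a : ℤ) (k : ℕ) {J : ℕ} (hJ : 1 ≤ J) :
    ∃ c : ℝ, c ≠ 0 ∧ ∃ r ∈ Msub q (q ^ (J - 1)),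
      (E0 q ^ k) (fvec q a (-(q ^ 1)) (-(q ^ J)))
        = ((c : ℝ) : ℂ) • fvec q (a - k) (-(q ^ (k + 1))) (-(q ^ J)) + r := by
  induction k with
  | zero => exact ⟨1, one_ne_zero, 0, Submodule.zero_mem _, by simp⟩
  | succ k ih =>
      obtain ⟨c, hc, r, hr, heq⟩ := ih
      obtain ⟨d, hd, r₂, hr₂, hstep⟩ := e0_step hq0 hq1 (a - k) k hJ
      refine ⟨d * c, mul_ne_zero hd hc, ((c : ℝ) : ℂ) • r₂ + E0 q r,
        Submodule.add_mem _ (Submodule.smul_mem _ _ hr₂) (E0_mem_Msub hq0 hq1 hr), ?_⟩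
      rw [pow_succ', Module.End.mul_apply, heq, map_add, map_smul, hstep,
        show a - (k : ℤ) - 1 = a - ((k : ℕ) + 1 : ℕ) by push_cast; ring,
        show k + 1 + 1 = k + 2 by ring]
      push_cast
      module

lemma K0zpow_fvec (hq0 : 0 < q) (m s : ℤ) {p t : ℝ} (hp : p ∈ Iq q) (ht : t ∈ Iq q) :
    K0zpow q m (fvec q s p t)
      = (((W ^ (-s) * Real.sqrt |p / t|) ^ m : ℝ) : ℂ) • fvec q s p t := by
  set lam := W ^ (-s) * Real.sqrt |p / t| with hlam
  have hlampos : 0 < lam :=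
    mul_pos (zpow_pos (W_pos hq0) _) (sqrt_abs_pos (div_ne_zero (Iq.ne_zero hq0 hp)
      (Iq.ne_zero hq0 ht)))
  have hpow : ∀ j : ℕ, (K0 q ^ j) (fvec q s p t) = ((lam ^ j : ℝ) : ℂ) • fvec q s p t := by
    intro j
    induction j with
    | zero => simp
    | succ j ih =>
        rw [pow_succ', Module.End.mul_apply, ih, map_smul, K0_fvec hq0, smul_smul,
          ← Complex.ofReal_mul, ← hlam, ← pow_succ]
  have hlam' : (W ^ s * Real.sqrt |t / p|) = lam⁻¹ := by
    refine eq_inv_of_mul_eq_one_left ?_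
    rw [hlam, sqrt_abs_div, sqrt_abs_div, zpow_neg]
    have h1 := sqrt_abs_ne (Iq.ne_zero hq0 hp)
    have h2 := sqrt_abs_ne (Iq.ne_zero hq0 ht)
    have h3 : (W : ℝ) ^ s ≠ 0 := zpow_ne_zero s (W_ne hq0)
    field_simp
  have hpowinv : ∀ j : ℕ, (K0inv q ^ j) (fvec q s p t)
      = ((lam⁻¹ ^ j : ℝ) : ℂ) • fvec q s p t := by
    intro j
    induction j with
    | zero => simp
    | succ j ih =>
        rw [pow_succ', Module.End.mul_apply, ih, map_smul, K0inv_fvec hq0, hlam',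
          smul_smul, ← Complex.ofReal_mul, ← pow_succ]
  rw [K0zpow]
  split_ifs with h
  · rw [hpow m.toNat, ← zpow_natCast lam, Int.toNat_of_nonneg h]
  · rw [hpowinv (-m).toNat, inv_pow, ← zpow_natCast lam, Int.toNat_of_nonneg
      (by omega), ← zpow_neg, neg_neg]

end QAux
end PartC2
section PartC3
namespace QAux

variable {q : ℝ}

local notation "W" => Real.sqrt q

lemma vand (S : Finset ℤ) : ∀ (d z : ℤ → ℂ), (∀ m ∈ S, z m ≠ 0) → Set.InjOn z S →
    (∀ n : ℕ, ∑ m ∈ S, d m * z m ^ n = 0) → ∀ m ∈ S, d m = 0 := by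
  induction S using Finset.induction_on with
  | empty => intro d z _ _ _ m hm; exact absurd hm (Finset.notMem_empty m)
  | @insert a S ha ih =>
      intro d z hz hinj hsum
      have hS0 : ∀ m ∈ S, d m = 0 := by
        have key : ∀ m ∈ S, d m * (z m - z a) = 0 := by
          refine ih (fun m => d m * (z m - z a)) z
            (fun m hm => hz m (Finset.mem_insert_of_mem hm))
            (hinj.mono (fun x hx => Finset.mem_insert_of_mem hx)) ?_
          intro n
          have e1 : ∑ m ∈ S, d m * z m ^ (n + 1) = -(d a * z a ^ (n + 1)) := by
            have h := hsum (n + 1); rw [Finset.sum_insert ha] at h; linear_combination h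
          have e2 : ∑ m ∈ S, d m * z m ^ n = -(d a * z a ^ n) := by
            have h := hsum n; rw [Finset.sum_insert ha] at h; linear_combination h
          have : ∑ m ∈ S, d m * (z m - z a) * z m ^ n
              = (∑ m ∈ S, d m * z m ^ (n + 1)) - z a * ∑ m ∈ S, d m * z m ^ n := by
            rw [Finset.mul_sum, ← Finset.sum_sub_distrib]
            exact Finset.sum_congr rfl fun m _ => by ring
          rw [this, e1, e2]; ring
        intro m hm
        rcases mul_eq_zero.1 (key m hm) with h | h
        · exact h
        · exfalso
          have : m = a := hinj (Finset.mem_insert_of_mem hm) (Finset.mem_insert_self a S)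
            (by linear_combination h)
          exact ha (this ▸ hm)
      intro m hm
      rcases Finset.mem_insert.1 hm with rfl | hm'
      · have h := hsum 0
        rw [Finset.sum_insert ha] at h
        simp only [pow_zero, mul_one] at h
        rw [Finset.sum_eq_zero (fun i hi => hS0 i hi), add_zero] at h
        exact h
      · exact hS0 m hm'

lemma T_apply (hq0 : 0 < q) (hq1 : q < 1) (k l n : ℕ) :
    ∃ c : ℝ, c ≠ 0 ∧ ∀ m : ℤ, ∃ r ∈ Msub q (q ^ (n + l)),
      (K0zpow q m * E0 q ^ k * E0dag q ^ l) (fvec q 0 (-(q ^ 1)) (-(q ^ (n + 1))))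
        = ((c * ((W ^ (2 * ((k : ℤ) - l) - n)) ^ m) : ℝ) : ℂ) •
            fvec q ((l : ℤ) - k) (-(q ^ (k + 1))) (-(q ^ (n + 1 + l))) + r := by
  obtain ⟨c1, hc1, hdag⟩ := chain_dag hq0 hq1 n l
  obtain ⟨c2, hc2, r, hr, he⟩ := e0_pow hq0 hq1 l k (J := n + 1 + l) (by omega)
  rw [show n + 1 + l - 1 = n + l by omega] at hr
  have hlam : W ^ (-((l : ℤ) - k)) * Real.sqrt |(-(q ^ (k + 1))) / (-(q ^ (n + 1 + l)))|
      = W ^ (2 * ((k : ℤ) - l) - n) := by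
    rw [neg_div_neg_eq, abs_of_pos (div_pos (pow_pos hq0 _) (pow_pos hq0 _)),
      ← zpow_natCast q (k + 1), ← zpow_natCast q (n + 1 + l), ← zpow_sub₀ (qne hq0),
      sqrt_zpow hq0, ← zpow_add₀ (W_ne hq0)]
    congr 1
    push_cast
    ring
  refine ⟨c1 * c2, mul_ne_zero hc1 hc2, fun m => ⟨((c1 : ℝ) : ℂ) • K0zpow q m r,
    Submodule.smul_mem _ _ (K0zpow_mem_Msub hq0 m hr), ?_⟩⟩
  rw [Module.End.mul_apply, Module.End.mul_apply, hdag, map_smul, he, map_smul, map_add,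
    map_smul,
    K0zpow_fvec hq0 m ((l : ℤ) - k) (mem_Iq_neg' hq0 (by omega)) (mem_Iq_neg' hq0 (by omega)),
    hlam]
  push_cast
  module

lemma eval_off (hq0 : 0 < q) (hq1 : q < 1) (n k L k' l' : ℕ) (m : ℤ)
    (hl : l' ≤ L) (hne : ¬(k' = k ∧ l' = L))
    (hp : -(q ^ (k + 1)) ∈ Iq q) (ht : -(q ^ (n + 1 + L)) ∈ Iq q) :
    ((K0zpow q m * E0 q ^ k' * E0dag q ^ l') (fvec q 0 (-(q ^ 1)) (-(q ^ (n + 1)))))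
      (((L : ℤ) - k, ⟨-(q ^ (k + 1)), hp⟩, ⟨-(q ^ (n + 1 + L)), ht⟩)) = 0 := by
  obtain ⟨c, hc, hm⟩ := T_apply hq0 hq1 k' l' n
  obtain ⟨r, hr, he⟩ := hm m
  rw [he, Finsupp.add_apply, Finsupp.smul_apply]
  have h1 : r (((L : ℤ) - k, ⟨-(q ^ (k + 1)), hp⟩, ⟨-(q ^ (n + 1 + L)), ht⟩)) = 0 := by
    refine Msub_apply_eq_zero hr ?_
    show |(-(q ^ (n + 1 + L)) : ℝ)| < q ^ (n + l')
    rw [abs_neg, abs_of_pos (pow_pos hq0 _)]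
    exact pow_lt_pow_right_of_lt_one₀ hq0 hq1 (by omega)
  have h2 : (fvec q ((l' : ℤ) - k') (-(q ^ (k' + 1))) (-(q ^ (n + 1 + l'))))
      (((L : ℤ) - k, ⟨-(q ^ (k + 1)), hp⟩, ⟨-(q ^ (n + 1 + L)), ht⟩)) = 0 := by
    rw [fvec_of_mem _ (mem_Iq_neg' hq0 (by omega)) (mem_Iq_neg' hq0 (by omega)),
      Finsupp.single_apply, if_neg]
    intro h
    simp only [Prod.mk.injEq, Subtype.mk.injEq, neg_inj] at h
    obtain ⟨h1', h2', h3'⟩ := h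
    have hk : k' = k := by
      have := (pow_right_strictAnti₀ hq0 hq1).injective h2'
      omega
    have hl' : l' = L := by
      have := (pow_right_strictAnti₀ hq0 hq1).injective h3'
      omega
    exact hne ⟨hk, hl'⟩
  rw [h1, h2, smul_zero, add_zero]

lemma eval_main (hq0 : 0 < q) (hq1 : q < 1) (n k L : ℕ)
    (hp : -(q ^ (k + 1)) ∈ Iq q) (ht : -(q ^ (n + 1 + L)) ∈ Iq q) :
    ∃ C : ℝ, C ≠ 0 ∧ ∀ m : ℤ,
      ((K0zpow q m * E0 q ^ k * E0dag q ^ L) (fvec q 0 (-(q ^ 1)) (-(q ^ (n + 1)))))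
        (((L : ℤ) - k, ⟨-(q ^ (k + 1)), hp⟩, ⟨-(q ^ (n + 1 + L)), ht⟩))
        = ((C * ((W ^ (2 * ((k : ℤ) - L) - n)) ^ m) : ℝ) : ℂ) := by
  obtain ⟨c, hc, hm⟩ := T_apply hq0 hq1 k L n
  refine ⟨c, hc, fun m => ?_⟩
  obtain ⟨r, hr, he⟩ := hm m
  rw [he, Finsupp.add_apply, Finsupp.smul_apply]
  have h1 : r (((L : ℤ) - k, ⟨-(q ^ (k + 1)), hp⟩, ⟨-(q ^ (n + 1 + L)), ht⟩)) = 0 := by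
    refine Msub_apply_eq_zero hr ?_
    show |(-(q ^ (n + 1 + L)) : ℝ)| < q ^ (n + L)
    rw [abs_neg, abs_of_pos (pow_pos hq0 _)]
    exact pow_lt_pow_right_of_lt_one₀ hq0 hq1 (by omega)
  rw [h1, add_zero, fvec_of_mem _ hp ht, Finsupp.single_eq_same, smul_eq_mul, mul_one]

end QAux
end PartC3
section PartC4
namespace QAux

variable {q : ℝ}

local notation "W" => Real.sqrt q

set_option maxHeartbeats 2000000 in
lemma partC (hq0 : 0 < q) (hq1 : q < 1) :
    LinearIndependent ℂ fun i : ℤ × ℕ × ℕ =>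
      K0zpow q i.1 * E0 q ^ i.2.1 * E0dag q ^ i.2.2 := by
  unfold LinearIndependent
  rw [injective_iff_map_eq_zero]
  intro g hg
  by_contra hgne
  have hsupp : g.support.Nonempty := Finsupp.support_nonempty_iff.2 hgne
  have hFne : (g.support.image fun i => i.2.2).Nonempty := hsupp.image _
  set L := (g.support.image fun i => i.2.2).max' hFne with hLdef
  obtain ⟨i₀, hi₀, hi₀L⟩ : ∃ i₀ ∈ g.support, i₀.2.2 = L := by
    obtain ⟨i₀, hi₀, h⟩ := Finset.mem_image.1 ((g.support.image fun i => i.2.2).max'_mem hFne)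
    exact ⟨i₀, hi₀, h⟩
  have hLmax : ∀ i ∈ g.support, i.2.2 ≤ L := fun i hi =>
    Finset.le_max' (g.support.image fun j => j.2.2) i.2.2
      (Finset.mem_image_of_mem (fun j => j.2.2) hi)
  set k := i₀.2.1 with hkdef
  -- membership proofs
  have hp : -(q ^ (k + 1)) ∈ Iq q := mem_Iq_neg' hq0 (by omega)
  have ht : ∀ n : ℕ, -(q ^ (n + 1 + L)) ∈ Iq q := fun n => mem_Iq_neg' hq0 (by omega)
  -- the global sum identity evaluated at the extraction index
  have hmain : ∀ n : ℕ, ∑ i ∈ g.support, g i *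
      (((K0zpow q i.1 * E0 q ^ i.2.1 * E0dag q ^ i.2.2) (fvec q 0 (-(q ^ 1)) (-(q ^ (n + 1)))))
        (((L : ℤ) - k, ⟨-(q ^ (k + 1)), hp⟩, ⟨-(q ^ (n + 1 + L)), ht n⟩))) = 0 := by
    intro n
    have h0 := hg
    rw [Finsupp.linearCombination_apply, Finsupp.sum] at h0
    have h2 := congrArg (fun A : Module.End ℂ (KSpace q) =>
      (A (fvec q 0 (-(q ^ 1)) (-(q ^ (n + 1)))))
        (((L : ℤ) - k, ⟨-(q ^ (k + 1)), hp⟩, ⟨-(q ^ (n + 1 + L)), ht n⟩))) h0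
    simpa [LinearMap.sum_apply, Finsupp.finset_sum_apply, LinearMap.smul_apply,
      Finsupp.smul_apply, smul_eq_mul] using h2
  -- reduce to the filtered sum
  set S := (g.support.filter fun i => i.2 = (k, L)).image Prod.fst with hSdef
  have hinjS : Set.InjOn (Prod.fst : ℤ × ℕ × ℕ → ℤ)
      ((g.support.filter fun i => i.2 = (k, L) : Finset (ℤ × ℕ × ℕ)) : Set (ℤ × ℕ × ℕ)) := by
    intro i hi j hj hij
    have hi2 := (Finset.mem_filter.1 hi).2
    have hj2 := (Finset.mem_filter.1 hj).2
    exact Prod.ext hij (hi2.trans hj2.symm)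
  have hsum : ∀ n : ℕ, ∑ m ∈ S,
      (g (m, k, L) * ((((W ^ (2 * ((k : ℤ) - L))) ^ m : ℝ)) : ℂ)) *
        ((((W : ℝ) ^ (-m) : ℝ) : ℂ)) ^ n = 0 := by
    intro n
    obtain ⟨C, hC, hCval⟩ := eval_main hq0 hq1 n k L hp (ht n)
    have hterm : ∀ i ∈ g.support, g i *
        (((K0zpow q i.1 * E0 q ^ i.2.1 * E0dag q ^ i.2.2)
            (fvec q 0 (-(q ^ 1)) (-(q ^ (n + 1)))))
          (((L : ℤ) - k, ⟨-(q ^ (k + 1)), hp⟩, ⟨-(q ^ (n + 1 + L)), ht n⟩)))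
        = if i.2 = (k, L) then
            g i * ((C * ((W ^ (2 * ((k : ℤ) - L) - n)) ^ i.1) : ℝ) : ℂ) else 0 := by
      intro i hi
      obtain ⟨m, k', l'⟩ := i
      by_cases h : (k', l') = (k, L)
      · rw [if_pos h]
        obtain ⟨hk', hl'⟩ := Prod.mk.injEq .. ▸ h
        subst hk'; subst hl'
        rw [hCval m]
      · rw [if_neg h]
        have hne : ¬(k' = k ∧ l' = L) := by
          intro ⟨h1, h2⟩; exact h (by rw [h1, h2])
        rw [eval_off hq0 hq1 n k L k' l' m (hLmax _ hi) hne hp (ht n), mul_zero]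
    have h3 : ∑ i ∈ g.support, g i *
        (((K0zpow q i.1 * E0 q ^ i.2.1 * E0dag q ^ i.2.2)
            (fvec q 0 (-(q ^ 1)) (-(q ^ (n + 1)))))
          (((L : ℤ) - k, ⟨-(q ^ (k + 1)), hp⟩, ⟨-(q ^ (n + 1 + L)), ht n⟩)))
        = ∑ i ∈ g.support.filter (fun i => i.2 = (k, L)),
            g i * ((C * ((W ^ (2 * ((k : ℤ) - L) - n)) ^ i.1) : ℝ) : ℂ) := by
      rw [Finset.sum_filter, Finset.sum_congr rfl hterm]
    have h4 : ∑ i ∈ g.support.filter (fun i => i.2 = (k, L)),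
          g i * ((C * ((W ^ (2 * ((k : ℤ) - L) - n)) ^ i.1) : ℝ) : ℂ)
        = ∑ m ∈ S, g (m, k, L) * ((C * ((W ^ (2 * ((k : ℤ) - L) - n)) ^ m) : ℝ) : ℂ) := by
      rw [hSdef, Finset.sum_image hinjS]
      refine Finset.sum_congr rfl fun i hi => ?_
      have hi2 := (Finset.mem_filter.1 hi).2
      rw [show ((i.1, k, L) : ℤ × ℕ × ℕ) = i by rw [← hi2]]
    have h5 := hmain n
    rw [h3, h4] at h5
    -- split the powers
    have hsplit : ∀ m : ℤ, ((W : ℝ) ^ (2 * ((k : ℤ) - L) - n)) ^ m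
        = ((W : ℝ) ^ (2 * ((k : ℤ) - L))) ^ m * ((W : ℝ) ^ (-m)) ^ n := by
      intro m
      rw [← zpow_natCast ((W : ℝ) ^ (-m)) n, ← zpow_mul, ← zpow_mul, ← zpow_mul,
        ← zpow_add₀ (W_ne hq0)]
      congr 1
      push_cast
      ring
    have h6 : (C : ℂ) * ∑ m ∈ S,
        (g (m, k, L) * ((((W ^ (2 * ((k : ℤ) - L))) ^ m : ℝ)) : ℂ)) *
          ((((W : ℝ) ^ (-m) : ℝ) : ℂ)) ^ n = 0 := by
      rw [Finset.mul_sum]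
      rw [← h5]
      refine Finset.sum_congr rfl fun m _ => ?_
      rw [hsplit m]
      push_cast
      ring
    have hCne : (C : ℂ) ≠ 0 := Complex.ofReal_ne_zero.2 hC
    exact (mul_eq_zero.1 h6).resolve_left hCne
  -- apply the Vandermonde lemma
  have hz : ∀ m ∈ S, (((W : ℝ) ^ (-m) : ℝ) : ℂ) ≠ 0 :=
    fun m _ => Complex.ofReal_ne_zero.2 (zpow_ne_zero _ (W_ne hq0))
  have hinj : Set.InjOn (fun m : ℤ => (((W : ℝ) ^ (-m) : ℝ) : ℂ)) ↑S := by
    intro m₁ _ m₂ _ h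
    have h' : (W : ℝ) ^ (-m₁) = (W : ℝ) ^ (-m₂) := Complex.ofReal_injective h
    have := zpow_right_injective₀ (W_pos hq0) (W_ne_one hq0 hq1) h'
    omega
  have hzero := vand S
    (fun m => g (m, k, L) * ((((W ^ (2 * ((k : ℤ) - L))) ^ m : ℝ)) : ℂ))
    (fun m => (((W : ℝ) ^ (-m) : ℝ) : ℂ)) hz hinj hsum
  -- contradiction
  have hi₀S : i₀.1 ∈ S := by
    rw [hSdef]
    refine Finset.mem_image_of_mem _ (Finset.mem_filter.2 ⟨hi₀, ?_⟩)
    exact Prod.ext hkdef.symm hi₀L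
  have := hzero i₀.1 hi₀S
  rcases mul_eq_zero.1 this with h | h
  · have hi₀eq : ((i₀.1, k, L) : ℤ × ℕ × ℕ) = i₀ := by
      exact Prod.ext rfl (Prod.ext hkdef hi₀L.symm)
    rw [hi₀eq] at h
    exact Finsupp.mem_support_iff.1 hi₀ h
  · exact Complex.ofReal_ne_zero.2 (zpow_ne_zero _ (zpow_ne_zero _ (W_ne hq0))) h

end QAux
end PartC4

theorem stmt0 (q : ℝ) (hq0 : 0 < q) (hq1 : q < 1) :
    -- (a) `K₀` is invertible and `K₀E₀ = q·E₀K₀`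
    (K0inv q * K0 q = 1 ∧ K0 q * K0inv q = 1) ∧
    K0 q * E0 q = (q : ℂ) • (E0 q * K0 q) ∧
    -- (b) `E₀†E₀ − E₀E₀† = (K₀² − K₀⁻²)/(q − q⁻¹)`
    E0dag q * E0 q - E0 q * E0dag q =
      ((q : ℂ) - (q : ℂ)⁻¹)⁻¹ • (K0 q ^ 2 - K0inv q ^ 2) ∧
    -- (c) the operators `K₀^m E₀^k (E₀†)^l` are linearly independent over `ℂ`
    LinearIndependent ℂ fun i : ℤ × ℕ × ℕ =>
      K0zpow q i.1 * E0 q ^ i.2.1 * E0dag q ^ i.2.2 :=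
  ⟨⟨QAux.partA1 hq0, QAux.partA1' hq0⟩, QAux.partA2 hq0,
    QAux.partB hq0 hq1, QAux.partC hq0 hq1⟩
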